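/- Tight instance for single-category goods (value computation): fix n ≥ 1, let M = {g_1, ..., g_{3n}} with common valuation v(g_j) = (2n − j)/(3n − 1) if j ≤ n, v(g_j) = (1/(6n−2))·⌈(5n+1−j)/2⌉ if n < j ≤ 3n−2, and v(g_j) = (3n − j)/(3n − 1) otherwise. Define the partition P_k = {g_k, g_{n+k}, g_{3n+1−k}} for k ≤ 2 and P_k = {g_k, g_{3n−2k+3}, g_{3n−2k+4}} for 3 ≤ k ≤ n. Then every bundle of this partition has value exactly 1: v(P_k) = 1 for all k ∈ {1, ..., n}, and each bundle has exactly 3 items (so the partition is feasible under quotas q⁻ = q⁺ = 3). -/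

import Mathlib

open Finset

/-- Item values of the tight goods instance (items 1-indexed `1, …, 3n`):
`v j = (2n−j)/(3n−1)` if `j ≤ n`, `v j = ⌈(5n+1−j)/2⌉/(6n−2)` if `n < j ≤ 3n−2`,
and `v j = (3n−j)/(3n−1)` otherwise. -/
noncomputable def tightGoodsVal (n : ℕ) (j : ℕ) : ℝ :=
  if j ≤ n then ((2 * n - j : ℕ) : ℝ) / ((3 * n : ℝ) - 1)
  else if j ≤ 3 * n - 2 then (((5 * n + 2 - j) / 2 : ℕ) : ℝ) / ((6 * n : ℝ) - 2)
  else ((3 * n - j : ℕ) : ℝ) / ((3 * n : ℝ) - 1)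

/-- Bundles of the tight goods instance: `P_k = {k, n+k, 3n+1−k}` for `k ≤ 2` and
`P_k = {k, 3n−2k+3, 3n−2k+4}` for `3 ≤ k ≤ n`. -/
def tightGoodsBundle (n : ℕ) (k : ℕ) : Finset ℕ :=
  if k ≤ 2 then {k, n + k, 3 * n + 1 - k} else {k, 3 * n - 2 * k + 3, 3 * n - 2 * k + 4}

/-- tight instance for single-category goods.  The bundles
`P_1, …, P_n` form a partition of the items `{1, …, 3n}`, each bundle has exactly `3`
items (feasible under `q⁻ = q⁺ = 3`), and each bundle has value exactly `1`. -/
theorem tight_goods_partition (n : ℕ) (hn : 1 ≤ n) :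
    (∀ k ∈ Finset.Icc 1 n,
        (∑ j ∈ tightGoodsBundle n k, tightGoodsVal n j) = 1 ∧
        (tightGoodsBundle n k).card = 3) ∧
    (∀ k ∈ Finset.Icc 1 n, ∀ k' ∈ Finset.Icc 1 n, k ≠ k' →
        Disjoint (tightGoodsBundle n k) (tightGoodsBundle n k')) ∧
    (Finset.Icc 1 n).biUnion (tightGoodsBundle n) = Finset.Icc 1 (3 * n) := by
  have hsum : ∀ k, 1 ≤ k → k ≤ n →
      (∑ j ∈ tightGoodsBundle n k, tightGoodsVal n j) = 1 := by
    intro k hk1 hk2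
    have hn' : (1:ℝ) ≤ n := by exact_mod_cast hn
    have h3 : ((3 * n : ℝ) - 1) ≠ 0 := by nlinarith
    have h6 : ((6 * n : ℝ) - 2) ≠ 0 := by nlinarith
    have h3' : (n:ℝ) * 3 - 1 ≠ 0 := by linarith
    have h6' : (n:ℝ) * 6 - 2 ≠ 0 := by linarith
    rcases eq_or_lt_of_le hn with h1 | hn2
    · -- n = 1, k = 1
      have hn1 : n = 1 := h1.symm
      have hk : k = 1 := by omega
      subst hn1 hk
      norm_num [tightGoodsBundle, tightGoodsVal, Finset.sum_insert, Finset.mem_insert]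
    · -- n ≥ 2
      have hn2 : 2 ≤ n := hn2
      unfold tightGoodsBundle
      split
      · -- k ≤ 2 : k = 1 or k = 2
        rename_i hk2'
        rw [Finset.sum_insert (by simp; omega), Finset.sum_insert (by simp; omega),
          Finset.sum_singleton]
        interval_cases k
        · -- k = 1 : elements 1, n+1, 3n
          have e1 : tightGoodsVal n 1 = ((2 * n - 1 : ℕ) : ℝ) / ((3 * n : ℝ) - 1) := by
            rw [tightGoodsVal, if_pos hn]
          have e2 : tightGoodsVal n (n + 1) = ((2 * n : ℕ) : ℝ) / ((6 * n : ℝ) - 2) := by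
            rw [tightGoodsVal, if_neg (by omega), if_pos (by omega)]
            congr 2
            omega
          have e3 : tightGoodsVal n (3 * n + 1 - 1) = 0 := by
            rw [tightGoodsVal, if_neg (by omega), if_neg (by omega)]
            have : 3 * n - (3 * n + 1 - 1) = 0 := by omega
            rw [this]; simp
          rw [e1, e2, e3]
          rw [Nat.cast_sub (by omega)]
          push_cast
          field_simp
          ring
        · -- k = 2 : elements 2, n+2, 3n-1
          have e1 : tightGoodsVal n 2 = ((2 * n - 2 : ℕ) : ℝ) / ((3 * n : ℝ) - 1) := by
            rw [tightGoodsVal, if_pos hn2]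
          have e2 : tightGoodsVal n (n + 2) = ((2 * n : ℕ) : ℝ) / ((6 * n : ℝ) - 2) := by
            rw [tightGoodsVal, if_neg (by omega), if_pos (by omega)]
            congr 2
            omega
          have e3 : tightGoodsVal n (3 * n + 1 - 2) = ((1 : ℕ) : ℝ) / ((3 * n : ℝ) - 1) := by
            rw [tightGoodsVal, if_neg (by omega), if_neg (by omega)]
            have h : 3 * n - (3 * n + 1 - 2) = 1 := by omega
            rw [h]
          rw [e1, e2, e3]
          rw [Nat.cast_sub (by omega)]
          push_cast
          field_simp
          ring
      · -- 3 ≤ k ≤ n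
        rename_i hk2'
        have hk3 : 3 ≤ k := by omega
        rw [Finset.sum_insert (by simp; omega), Finset.sum_insert (by simp),
          Finset.sum_singleton]
        have e1 : tightGoodsVal n k = ((2 * n - k : ℕ) : ℝ) / ((3 * n : ℝ) - 1) := by
          rw [tightGoodsVal, if_pos hk2]
        have e2 : tightGoodsVal n (3 * n - 2 * k + 3)
            = ((n + k - 1 : ℕ) : ℝ) / ((6 * n : ℝ) - 2) := by
          rw [tightGoodsVal, if_neg (by omega), if_pos (by omega)]
          congr 2
          omega
        have e3 : tightGoodsVal n (3 * n - 2 * k + 4)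
            = ((n + k - 1 : ℕ) : ℝ) / ((6 * n : ℝ) - 2) := by
          rw [tightGoodsVal, if_neg (by omega), if_pos (by omega)]
          congr 2
          omega
        rw [e1, e2, e3]
        rw [Nat.cast_sub (by omega), Nat.cast_sub (by omega)]
        push_cast
        field_simp
        ring
  refine ⟨?_, ?_, ?_⟩
  · intro k hk
    rw [Finset.mem_Icc] at hk
    refine ⟨hsum k hk.1 hk.2, ?_⟩
    unfold tightGoodsBundle
    split <;>
    · rw [Finset.card_insert_of_notMem, Finset.card_insert_of_notMem,
        Finset.card_singleton] <;> simp <;> omega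
  · intro k hk k' hk' hne
    rw [Finset.mem_Icc] at hk hk'
    rw [Finset.disjoint_left]
    intro a ha ha'
    unfold tightGoodsBundle at ha ha'
    split at ha <;> split at ha' <;> simp [Finset.mem_insert] at ha ha' <;> omega
  · ext j
    simp only [Finset.mem_biUnion, Finset.mem_Icc]
    constructor
    · rintro ⟨k, hk, hj⟩
      unfold tightGoodsBundle at hj
      split at hj <;> simp [Finset.mem_insert] at hj <;> omega
    · intro hj
      by_cases h1 : j ≤ n
      · exact ⟨j, ⟨hj.1, h1⟩, by unfold tightGoodsBundle; split <;> simp⟩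
      · by_cases h2 : j = n + 1 ∨ j = 3 * n
        · refine ⟨1, ⟨le_refl _, hn⟩, ?_⟩
          unfold tightGoodsBundle
          rw [if_pos (by norm_num)]
          simp only [Finset.mem_insert, Finset.mem_singleton]
          omega
        · by_cases h3 : j = n + 2 ∨ j = 3 * n - 1
          · refine ⟨2, ⟨by norm_num, by omega⟩, ?_⟩
            unfold tightGoodsBundle
            rw [if_pos (by norm_num)]
            simp only [Finset.mem_insert, Finset.mem_singleton]
            omega
          · refine ⟨(3 * n + 4 - j) / 2, ⟨by omega, by omega⟩, ?_⟩
            unfold tightGoodsBundle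
            rw [if_neg (by omega)]
            simp only [Finset.mem_insert, Finset.mem_singleton]
            omega
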